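/- arXiv:2105.07705 — 2 statements merged into one kernel-verified Lean document; each statement's English description precedes it below -/
import Mathlib

section
/- Let r ≥ 1 and f, g ∈ M_r(ℂ)[Z] be matrix polynomials. Define P_f(x, y₁) = det(y₁ I − f(xI)) ∈ ℂ[x, y₁] and T_{f,g}(y₁, y₂) = Res_x(P_f(x, y₁), y₂ − det(g(xI))) ∈ ℂ[y₁, y₂], the resultant with respect to x. If every eigenvalue of f(xI), as an element of an algebraic closure of ℂ(x), is multiplicatively independent of det(g(xI)), then T_{f,g}(y₁, y₂) has no factor of the form y₁^i y₂^j − ρ or y₁^i − ρ y₂^j for nonnegative integers i, j not both zero and a root of unity ρ. -/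
open Polynomial Matrix

/-- The Sylvester matrix of two polynomials `p, q` over a commutative ring: an
`(n + m) × (n + m)` matrix, where `m = deg p` and `n = deg q`, whose first `n` rows are
the shifted coefficient sequences of `p` and whose last `m` rows are the shifted
coefficient sequences of `q`. -/
noncomputable def sylvester {R : Type*} [CommRing R] (p q : Polynomial R) :
    Matrix (Fin (q.natDegree + p.natDegree)) (Fin (q.natDegree + p.natDegree)) R :=
  Matrix.of fun i j =>
    if (i : ℕ) < q.natDegree then
      (if (j : ℕ) ≤ (i : ℕ) + p.natDegree then p.coeff (p.natDegree + i - j) else 0)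
    else
      (if (j : ℕ) ≤ ((i : ℕ) - q.natDegree) + q.natDegree then
        q.coeff (q.natDegree + ((i : ℕ) - q.natDegree) - j) else 0)

/-- The resultant of two polynomials: the determinant of their Sylvester matrix. -/
noncomputable def resultant {R : Type*} [CommRing R] (p q : Polynomial R) : R :=
  (_root_.sylvester p q).det

/-- `P_f(x, y₁) = det(y₁ I − f(xI))`, regarded as a polynomial in `x` whose coefficients
are polynomials in the variables `y₁ = X 0`, `y₂ = X 1`. -/
noncomputable def Pmat {r : ℕ} (f : Polynomial (Matrix (Fin r) (Fin r) ℂ)) (v : Fin 2) :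
    Polynomial (MvPolynomial (Fin 2) ℂ) :=
  (Polynomial.C (MvPolynomial.X v : MvPolynomial (Fin 2) ℂ) •
      (1 : Matrix (Fin r) (Fin r) (Polynomial (MvPolynomial (Fin 2) ℂ))) -
    (matPolyEquiv.symm f).map (Polynomial.map (MvPolynomial.C))).det

/-- `R_{f,g}(y₁, y₂) = Res_x(P_f(x, y₁), P_g(x, y₂)) ∈ ℂ[y₁, y₂]`. -/
noncomputable def Rres {r : ℕ} (f g : Polynomial (Matrix (Fin r) (Fin r) ℂ)) :
    MvPolynomial (Fin 2) ℂ :=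
  _root_.resultant (Pmat f 0) (Pmat g 1)

/-- `T_{f,g}(y₁, y₂) = Res_x(P_f(x, y₁), y₂ − det(g(xI))) ∈ ℂ[y₁, y₂]`. -/
noncomputable def Tres {r : ℕ} (f g : Polynomial (Matrix (Fin r) (Fin r) ℂ)) :
    MvPolynomial (Fin 2) ℂ :=
  _root_.resultant (Pmat f 0)
    (Polynomial.C (MvPolynomial.X 1 : MvPolynomial (Fin 2) ℂ) -
      ((matPolyEquiv.symm g).det).map (MvPolynomial.C))

/-- The natural map from `ℂ[x]` into an algebraic closure of `ℂ(x)`. -/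
noncomputable def toClosure : Polynomial ℂ →+* AlgebraicClosure (RatFunc ℂ) :=
  (algebraMap (RatFunc ℂ) (AlgebraicClosure (RatFunc ℂ))).comp
    (algebraMap (Polynomial ℂ) (RatFunc ℂ))


section Chunks

local notation "Ω" => AlgebraicClosure (RatFunc ℂ)



noncomputable def sylShape {K : Type*} [CommRing K] (m n : ℕ) (P Q : Polynomial K) :
    Matrix (Fin (n + m)) (Fin (n + m)) K :=
  Matrix.of fun i j =>
    if (i : ℕ) < n then
      (if (j : ℕ) ≤ (i : ℕ) + m then P.coeff (m + i - j) else 0)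
    else
      (if (j : ℕ) ≤ ((i : ℕ) - n) + n then Q.coeff (n + ((i : ℕ) - n) - j) else 0)

lemma sylShape_det_eq_zero {K : Type*} [Field K] {m n : ℕ} {P Q : K[X]}
    (hP : P.degree ≤ (m : WithBot ℕ)) (hQ : Q.degree ≤ (n : WithBot ℕ))
    (hdet : (sylShape m n P Q).det = 0) :
    ∃ u v : K[X], ¬(u = 0 ∧ v = 0) ∧ u.degree < (n : WithBot ℕ) ∧
      v.degree < (m : WithBot ℕ) ∧ u * P + v * Q = 0 := by
  rcases Nat.eq_zero_or_pos (n + m) with hN | hN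
  · exfalso
    haveI : IsEmpty (Fin (n + m)) := by rw [hN]; infer_instance
    rw [Matrix.det_isEmpty] at hdet
    exact one_ne_zero hdet
  obtain ⟨w, hw0, hwM⟩ := Matrix.exists_vecMul_eq_zero_iff.mpr hdet
  set u : K[X] := ∑ i : Fin (n + m), if (i : ℕ) < n then C (w i) * X ^ (n - 1 - (i : ℕ)) else 0 with hu
  set v : K[X] := ∑ i : Fin (n + m), if n ≤ (i : ℕ) then C (w i) * X ^ (n + m - 1 - (i : ℕ)) else 0 with hv
  have key : u * P + v * Q = 0 := by
    have hup : u * P = ∑ i : Fin (n + m),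
        if (i : ℕ) < n then C (w i) * P * X ^ (n - 1 - (i : ℕ)) else 0 := by
      rw [hu, Finset.sum_mul]
      refine Finset.sum_congr rfl fun i _ => ?_
      split_ifs
      · ring
      · rw [zero_mul]
    have hvq : v * Q = ∑ i : Fin (n + m),
        if n ≤ (i : ℕ) then C (w i) * Q * X ^ (n + m - 1 - (i : ℕ)) else 0 := by
      rw [hv, Finset.sum_mul]
      refine Finset.sum_congr rfl fun i _ => ?_
      split_ifs
      · ring
      · rw [zero_mul]
    rw [hup, hvq, ← Finset.sum_add_distrib]
    ext e
    rw [Polynomial.coeff_zero, Polynomial.finset_sum_coeff]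
    rcases lt_or_ge e (n + m) with he | he
    · have := congrFun hwM ⟨n + m - 1 - e, by omega⟩
      rw [Pi.zero_apply] at this
      rw [← this]
      simp only [Matrix.vecMul, dotProduct]
      refine Finset.sum_congr rfl fun i _ => ?_
      rw [Polynomial.coeff_add]
      rcases lt_or_ge (i : ℕ) n with hi | hi
      · rw [if_pos hi, if_neg (by omega), Polynomial.coeff_zero, add_zero]
        rw [Polynomial.coeff_mul_X_pow']
        simp only [sylShape, Matrix.of_apply, if_pos hi]
        split_ifs with h1 h2 h2
        · rw [Polynomial.coeff_C_mul]
          congr 2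
          omega
        · exfalso; omega
        · exfalso; omega
        · rw [mul_zero]
      · rw [if_neg (by omega), if_pos hi, Polynomial.coeff_zero, zero_add]
        rw [Polynomial.coeff_mul_X_pow']
        simp only [sylShape, Matrix.of_apply, if_neg (by omega : ¬ (i:ℕ) < n)]
        split_ifs with h1 h2 h2
        · rw [Polynomial.coeff_C_mul]
          congr 2
          omega
        · exfalso; omega
        · exfalso; omega
        · rw [mul_zero]
    · refine Finset.sum_eq_zero fun i _ => ?_
      rw [Polynomial.coeff_add]
      rcases lt_or_ge (i : ℕ) n with hi | hi
      · rw [if_pos hi, if_neg (by omega), Polynomial.coeff_zero, add_zero,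
          Polynomial.coeff_mul_X_pow']
        split_ifs with h1
        · rw [Polynomial.coeff_C_mul,
            Polynomial.coeff_eq_zero_of_degree_lt (lt_of_le_of_lt hP
              (Nat.cast_lt.mpr (by omega))), mul_zero]
        · rfl
      · rw [if_neg (by omega), if_pos hi, Polynomial.coeff_zero, zero_add,
          Polynomial.coeff_mul_X_pow']
        split_ifs with h1
        · rw [Polynomial.coeff_C_mul,
            Polynomial.coeff_eq_zero_of_degree_lt (lt_of_le_of_lt hQ
              (Nat.cast_lt.mpr (by omega))), mul_zero]
        · rfl
  have hudeg : u.degree < (n : WithBot ℕ) := by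
    refine lt_of_le_of_lt (Polynomial.degree_sum_le _ _) ?_
    refine (Finset.sup_lt_iff (by exact WithBot.bot_lt_coe n : (⊥ : WithBot ℕ) < (n : WithBot ℕ))).mpr ?_
    intro i _
    split_ifs with hi
    · exact lt_of_le_of_lt (Polynomial.degree_C_mul_X_pow_le _ _)
        (Nat.cast_lt.mpr (by omega))
    · rw [Polynomial.degree_zero]; exact WithBot.bot_lt_coe _
  have hvdeg : v.degree < (m : WithBot ℕ) := by
    refine lt_of_le_of_lt (Polynomial.degree_sum_le _ _) ?_
    refine (Finset.sup_lt_iff (by exact WithBot.bot_lt_coe m : (⊥ : WithBot ℕ) < (m : WithBot ℕ))).mpr ?_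
    intro i _
    split_ifs with hi
    · exact lt_of_le_of_lt (Polynomial.degree_C_mul_X_pow_le _ _)
        (Nat.cast_lt.mpr (by omega))
    · rw [Polynomial.degree_zero]; exact WithBot.bot_lt_coe _
  refine ⟨u, v, ?_, hudeg, hvdeg, key⟩
  rintro ⟨hu0, hv0⟩
  obtain ⟨i₀, hi₀⟩ : ∃ i, w i ≠ 0 := Function.ne_iff.mp hw0
  rcases lt_or_ge (i₀ : ℕ) n with hi | hi
  · apply hi₀
    have : u.coeff (n - 1 - (i₀ : ℕ)) = w i₀ := by
      rw [hu, Polynomial.finset_sum_coeff]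
      rw [Finset.sum_eq_single i₀]
      · rw [if_pos hi, Polynomial.coeff_C_mul, Polynomial.coeff_X_pow, if_pos rfl, mul_one]
      · intro b _ hb
        split_ifs with hbn
        · rw [Polynomial.coeff_C_mul, Polynomial.coeff_X_pow, if_neg (by
            intro hEq
            exact hb (Fin.ext (by omega))), mul_zero]
        · rfl
      · intro h; exact absurd (Finset.mem_univ i₀) h
    rw [hu0] at this
    rw [← this, Polynomial.coeff_zero]
  · apply hi₀
    have : v.coeff (n + m - 1 - (i₀ : ℕ)) = w i₀ := by
      rw [hv, Polynomial.finset_sum_coeff]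
      rw [Finset.sum_eq_single i₀]
      · rw [if_pos hi, Polynomial.coeff_C_mul, Polynomial.coeff_X_pow, if_pos rfl, mul_one]
      · intro b _ hb
        split_ifs with hbn
        · rw [Polynomial.coeff_C_mul, Polynomial.coeff_X_pow, if_neg (by
            intro hEq
            exact hb (Fin.ext (by omega))), mul_zero]
        · rfl
      · intro h; exact absurd (Finset.mem_univ i₀) h
    rw [hv0] at this
    rw [← this, Polynomial.coeff_zero]

lemma sylShape_map {K L : Type*} [CommRing K] [CommRing L] (φ : K →+* L) (m n : ℕ)
    (P Q : K[X]) : (sylShape m n P Q).map φ = sylShape m n (P.map φ) (Q.map φ) := by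
  ext i j
  simp only [sylShape, Matrix.map_apply, Matrix.of_apply, apply_ite φ, map_zero,
    Polynomial.coeff_map]

lemma eval_charpoly_eq_det {K : Type*} [CommRing K] {r : ℕ} (M : Matrix (Fin r) (Fin r) K)
    (c : K) :
    (M.charpoly).eval c = (c • (1 : Matrix (Fin r) (Fin r) K) - M).det := by
  rw [Matrix.charpoly, ← Polynomial.coe_evalRingHom, RingHom.map_det]
  congr 1
  ext i j
  by_cases h : i = j
  · subst h
    simp [Matrix.charmatrix_apply_eq, Matrix.one_apply]
  · simp [Matrix.charmatrix_apply_ne _ _ _ h, Matrix.one_apply, h]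

lemma exists_eigenvalue {K : Type*} [Field K] [IsAlgClosed K] {r : ℕ} (hr : 1 ≤ r)
    (M : Matrix (Fin r) (Fin r) K) :
    ∃ μ : K, (μ • (1 : Matrix (Fin r) (Fin r) K) - M).det = 0 := by
  obtain ⟨μ, hμ⟩ := IsAlgClosed.exists_root M.charpoly (by
    rw [Matrix.charpoly_degree_eq_dim, Fintype.card_fin]
    exact_mod_cast (by omega : r ≠ 0))
  exact ⟨μ, by rw [← eval_charpoly_eq_det]; exact hμ⟩

lemma exists_common_root {K : Type*} [Field K] [IsAlgClosed K] {m n : ℕ} {P Q : K[X]}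
    (hP : P.degree ≤ (m : WithBot ℕ)) (hQd : Q.degree = (n : WithBot ℕ)) (hn : 1 ≤ n)
    (hdet : (sylShape m n P Q).det = 0) :
    ∃ x₀ : K, P.eval x₀ = 0 ∧ Q.eval x₀ = 0 := by
  classical
  have hQdne : Q.degree ≠ 0 := by
    rw [hQd]; exact_mod_cast (by omega : n ≠ 0)
  have hQ0 : Q ≠ 0 := by
    intro h
    rw [h, Polynomial.degree_zero] at hQd
    exact absurd hQd.symm (by simp)
  obtain ⟨u, v, huv, hud, hvd, huvPQ⟩ := sylShape_det_eq_zero hP (le_of_eq hQd) hdet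
  by_cases hPz : P = 0
  · obtain ⟨x₀, hx₀⟩ := IsAlgClosed.exists_root Q hQdne
    exact ⟨x₀, by simp [hPz], hx₀⟩
  by_contra hno
  push_neg at hno
  have hcop : IsCoprime Q P := by
    rw [← EuclideanDomain.gcd_isUnit_iff]
    set d := EuclideanDomain.gcd Q P with hd
    have hd0 : d ≠ 0 := fun h => hQ0 (EuclideanDomain.gcd_eq_zero_iff.mp h).1
    by_contra hdu
    have hddeg : d.degree ≠ 0 := fun h => hdu (Polynomial.isUnit_iff_degree_eq_zero.mpr h)
    obtain ⟨z, hz⟩ := IsAlgClosed.exists_root d hddeg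
    have hPe : P.eval z = 0 :=
      Polynomial.eval_eq_zero_of_dvd_of_eval_eq_zero (EuclideanDomain.gcd_dvd_right Q P) hz
    have hQe : Q.eval z = 0 :=
      Polynomial.eval_eq_zero_of_dvd_of_eval_eq_zero (EuclideanDomain.gcd_dvd_left Q P) hz
    exact hno z hPe hQe
  have hu0 : u ≠ 0 := by
    intro h
    rw [h, zero_mul, zero_add] at huvPQ
    rcases mul_eq_zero.mp huvPQ with hv | hq
    · exact huv ⟨h, hv⟩
    · exact hQ0 hq
  have hQdvd : Q ∣ u * P := ⟨-v, by
    have : u * P = -(v * Q) := by linear_combination huvPQ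
    rw [this]; ring⟩
  have hQu : Q ∣ u := hcop.dvd_of_dvd_mul_right hQdvd
  have := Polynomial.degree_le_of_dvd hQu hu0
  rw [hQd] at this
  exact absurd (lt_of_le_of_lt this hud) (lt_irrefl _)

lemma halg : (algebraMap ℂ Ω) = toClosure.comp Polynomial.C := by
  refine RingHom.ext fun z => ?_
  show algebraMap ℂ Ω z = toClosure (Polynomial.C z)
  rw [toClosure, RingHom.comp_apply,
    IsScalarTower.algebraMap_apply ℂ (RatFunc ℂ) Ω z,
    IsScalarTower.algebraMap_apply ℂ (Polynomial ℂ) (RatFunc ℂ) z,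
    Polynomial.algebraMap_eq]

lemma toClosure_injective : Function.Injective toClosure :=
  (algebraMap (RatFunc ℂ) Ω).injective.comp (IsFractionRing.injective (Polynomial ℂ) (RatFunc ℂ))

lemma s_not_integral : ¬ IsIntegral ℂ (toClosure (X : Polynomial ℂ)) := by
  intro h
  obtain ⟨q, hq0, hqe⟩ := h.isAlgebraic
  have hq : toClosure q = 0 := by
    rw [Polynomial.aeval_def, halg] at hqe
    calc toClosure q = toClosure (Polynomial.eval₂ Polynomial.C X q) := by
          rw [Polynomial.eval₂_C_X]
      _ = Polynomial.eval₂ (toClosure.comp Polynomial.C) (toClosure X) q :=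
          Polynomial.hom_eval₂ _ _ _ _
      _ = 0 := hqe
  exact hq0 (toClosure_injective (by rw [hq, map_zero]))

lemma eval_charpoly_eq_detB {K : Type*} [CommRing K] {r : ℕ} (M : Matrix (Fin r) (Fin r) K)
    (c : K) :
    (M.charpoly).eval c = (c • (1 : Matrix (Fin r) (Fin r) K) - M).det := by
  rw [Matrix.charpoly, ← Polynomial.coe_evalRingHom, RingHom.map_det]
  congr 1
  ext i j
  by_cases h : i = j
  · subst h
    simp [Matrix.charmatrix_apply_eq, Matrix.one_apply]
  · simp [Matrix.charmatrix_apply_ne _ _ _ h, Matrix.one_apply, h]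

lemma eigen_integral {r : ℕ} (F : Matrix (Fin r) (Fin r) (Polynomial ℂ)) {x₀ a : Ω}
    (hx : IsIntegral ℂ x₀)
    (hdet : (a • (1 : Matrix (Fin r) (Fin r) Ω) -
      F.map (fun h => Polynomial.aeval x₀ h)).det = 0) :
    IsIntegral ℂ a := by
  classical
  set S := integralClosure ℂ Ω with hS
  have hsub : Algebra.adjoin ℂ ({x₀} : Set Ω) ≤ S :=
    Algebra.adjoin_le_iff.mpr (Set.singleton_subset_iff.mpr hx)
  have hmem : ∀ h : Polynomial ℂ, Polynomial.aeval x₀ h ∈ S := fun h =>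
    hsub (Polynomial.aeval_mem_adjoin_singleton ℂ x₀)
  set B : Matrix (Fin r) (Fin r) S := fun i j => ⟨Polynomial.aeval x₀ (F i j), hmem _⟩ with hB
  have hBmap : B.map (algebraMap S Ω) = F.map (fun h => Polynomial.aeval x₀ h) := rfl
  have hchar : Polynomial.eval a ((B.charpoly).map (algebraMap S Ω)) = 0 := by
    rw [← Matrix.charpoly_map, hBmap, eval_charpoly_eq_detB]
    exact hdet
  have hint : IsIntegral S a := ⟨B.charpoly, B.charpoly_monic, by
    rw [Polynomial.eval₂_eq_eval_map]; exact hchar⟩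
  exact isIntegral_trans a hint

lemma ringhom_extends' {K S M : Type*} [Field K] [Field S] [Field M] [IsAlgClosed M]
    [Algebra K S] [Algebra.IsAlgebraic K S] (φ : K →+* M) :
    ∃ σ : S →+* M, ∀ z : K, σ (algebraMap K S z) = φ z := by
  letI : Algebra K M := φ.toAlgebra
  haveI : NoZeroSMulDivisors K S :=
    inferInstance
  haveI : NoZeroSMulDivisors K M :=
    inferInstance
  exact ⟨(IsAlgClosed.lift : S →ₐ[K] M).toRingHom, fun z => AlgHom.commutes _ z⟩

lemma exists_sigma' (x₀ : Ω)
    (hinj : Function.Injective (fun h : Polynomial ℂ => Polynomial.aeval x₀ h)) :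
    ∃ σ : Ω →+* Ω, Function.Injective ⇑σ ∧
      ∀ h : Polynomial ℂ, σ (toClosure h) = Polynomial.aeval x₀ h := by
  set ψ : Polynomial ℂ →+* Ω := (Polynomial.aeval x₀ : Polynomial ℂ →ₐ[ℂ] Ω).toRingHom with hψdef
  have hψ : Function.Injective ⇑ψ := hinj
  let L1 : RatFunc ℂ →+* Ω := IsFractionRing.lift hψ
  have hL1 : ∀ h : Polynomial ℂ, L1 (algebraMap (Polynomial ℂ) (RatFunc ℂ) h) = ψ h :=
    fun h => IsFractionRing.lift_algebraMap hψ h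
  obtain ⟨σ, hσz⟩ := ringhom_extends' (K := RatFunc ℂ) (S := Ω) (M := Ω) L1
  refine ⟨σ, σ.injective, fun h => ?_⟩
  show σ (toClosure h) = Polynomial.aeval x₀ h
  rw [toClosure, RingHom.comp_apply, hσz, hL1]
  rfl

lemma exists_mu' {r : ℕ} (F : Matrix (Fin r) (Fin r) (Polynomial ℂ)) (σ : Ω →+* Ω)
    (x₀ : Ω)
    (hσ : ∀ h : Polynomial ℂ, σ (toClosure h) = Polynomial.aeval x₀ h) {a : Ω}
    (hdet : (a • (1 : Matrix (Fin r) (Fin r) Ω) -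
      F.map (fun h => Polynomial.aeval x₀ h)).det = 0) :
    ∃ μ : Ω, σ μ = a ∧
      (μ • (1 : Matrix (Fin r) (Fin r) Ω) - F.map ⇑toClosure).det = 0 := by
  classical
  set Fc := F.map ⇑toClosure with hFcdef
  have hFc : (Fc.map ⇑σ) = F.map (fun h => Polynomial.aeval x₀ h) := by
    ext i j
    simp [hFcdef, Matrix.map_apply, hσ]
  have hroot : Polynomial.eval a ((Fc.charpoly).map σ) = 0 := by
    rw [← Matrix.charpoly_map, hFc, eval_charpoly_eq_det]
    exact hdet
  have hsplits : (Fc.charpoly).Splits := IsAlgClosed.splits _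
  have hne : (Fc.charpoly).map σ ≠ 0 := ((Matrix.charpoly_monic Fc).map σ).ne_zero
  have hmem : a ∈ ((Fc.charpoly).map σ).roots :=
    Polynomial.mem_roots'.mpr ⟨hne, hroot⟩
  rw [hsplits.roots_map σ] at hmem
  obtain ⟨μ, hμmem, hμ⟩ := Multiset.mem_map.mp hmem
  refine ⟨μ, hμ, ?_⟩
  rw [← eval_charpoly_eq_det]
  exact (Polynomial.mem_roots'.mp hμmem).2

section Glue

open MvPolynomial

variable {r : ℕ}

/-- The evaluation hom `ℂ[y₁,y₂] → Ω` at `(a, b)`. -/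
noncomputable def phiab (a b : Ω) : MvPolynomial (Fin 2) ℂ →+* Ω :=
  (MvPolynomial.aeval ![a, b] : MvPolynomial (Fin 2) ℂ →ₐ[ℂ] Ω).toRingHom

lemma phiab_X0 (a b : Ω) : phiab a b (MvPolynomial.X 0) = a := by
  simp [phiab]

lemma phiab_X1 (a b : Ω) : phiab a b (MvPolynomial.X 1) = b := by
  simp [phiab]

lemma phiab_comp_C (a b : Ω) :
    (phiab a b).comp (MvPolynomial.C : ℂ →+* MvPolynomial (Fin 2) ℂ) = algebraMap ℂ Ω :=
  RingHom.ext fun z => by simp [phiab]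

/-- E1 : evaluation of the resultant as determinant of the mapped Sylvester shape. -/
lemma eval_Tres (f g : Polynomial (Matrix (Fin r) (Fin r) ℂ)) (a b : Ω) :
    phiab a b (Tres f g) =
      (sylShape (Pmat f 0).natDegree
        (Polynomial.C (MvPolynomial.X 1 : MvPolynomial (Fin 2) ℂ) -
          ((matPolyEquiv.symm g).det).map (MvPolynomial.C)).natDegree
        ((Pmat f 0).map (phiab a b))
        ((Polynomial.C (MvPolynomial.X 1 : MvPolynomial (Fin 2) ℂ) -
          ((matPolyEquiv.symm g).det).map (MvPolynomial.C)).map (phiab a b))).det := by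
  rw [Tres, _root_.resultant, RingHom.map_det]
  congr 1
  rw [RingHom.mapMatrix_apply]
  exact sylShape_map (phiab a b) _ _ _ _

/-- E2 : the second polynomial maps to `C b - D'`. -/
lemma map_q (g : Polynomial (Matrix (Fin r) (Fin r) ℂ)) (a b : Ω) :
    (Polynomial.C (MvPolynomial.X 1 : MvPolynomial (Fin 2) ℂ) -
        ((matPolyEquiv.symm g).det).map (MvPolynomial.C)).map (phiab a b) =
      Polynomial.C b - ((matPolyEquiv.symm g).det).map (algebraMap ℂ Ω) := by
  rw [Polynomial.map_sub, Polynomial.map_C, phiab_X1, Polynomial.map_map, phiab_comp_C]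

/-- E4 : evaluating the mapped `Pmat` at `x₀`. -/
lemma eval_Pmat (f : Polynomial (Matrix (Fin r) (Fin r) ℂ)) (a b x₀ : Ω) :
    Polynomial.eval x₀ ((Pmat f 0).map (phiab a b)) =
      (a • (1 : Matrix (Fin r) (Fin r) Ω) -
        (matPolyEquiv.symm f).map (fun h => Polynomial.aeval x₀ h)).det := by
  set θ : Polynomial (MvPolynomial (Fin 2) ℂ) →+* Ω :=
    (Polynomial.evalRingHom x₀).comp (Polynomial.mapRingHom (phiab a b)) with hθ
  have h1 : Polynomial.eval x₀ ((Pmat f 0).map (phiab a b)) = θ (Pmat f 0) := rfl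
  rw [h1, Pmat, RingHom.map_det]
  congr 1
  ext i j
  simp only [RingHom.mapMatrix_apply, Matrix.map_apply, Matrix.sub_apply, Matrix.smul_apply,
    smul_eq_mul, _root_.map_sub, _root_.map_mul]
  have hCX : θ (Polynomial.C (MvPolynomial.X 0)) = a := by
    rw [hθ, RingHom.comp_apply, Polynomial.coe_mapRingHom, Polynomial.map_C,
      Polynomial.coe_evalRingHom, Polynomial.eval_C, phiab_X0]
  have hone : θ ((1 : Matrix (Fin r) (Fin r) (Polynomial (MvPolynomial (Fin 2) ℂ))) i j) =
      (1 : Matrix (Fin r) (Fin r) Ω) i j := by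
    rw [Matrix.one_apply, Matrix.one_apply, apply_ite θ, _root_.map_one, _root_.map_zero]
  have hent : θ (((matPolyEquiv.symm f) i j).map MvPolynomial.C) =
      Polynomial.aeval x₀ ((matPolyEquiv.symm f) i j) := by
    rw [hθ, RingHom.comp_apply, Polynomial.coe_mapRingHom, Polynomial.map_map, phiab_comp_C,
      Polynomial.coe_evalRingHom, Polynomial.eval_map, Polynomial.aeval_def]
  rw [hCX, hone, hent]

end Glue

section Master

open MvPolynomial

variable {r : ℕ}

lemma exists_pow_eq {K : Type*} [Field K] [IsAlgClosed K] {i : ℕ} (hi : i ≠ 0) (c : K) :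
    ∃ a : K, a ^ i = c := by
  obtain ⟨a, ha⟩ := IsAlgClosed.exists_root (Polynomial.X ^ i - Polynomial.C c) (by
    rw [Polynomial.degree_X_pow_sub_C (Nat.pos_of_ne_zero hi)]
    exact_mod_cast hi)
  refine ⟨a, ?_⟩
  rwa [Polynomial.IsRoot, Polynomial.eval_sub, Polynomial.eval_pow, Polynomial.eval_X,
    Polynomial.eval_C, sub_eq_zero] at ha

lemma pairne1 {K L : ℤ} (h : K ≠ 0) : (K, L) ≠ (0, 0) := by
  intro hp
  rw [Prod.ext_iff] at hp
  exact h hp.1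

lemma pairne2 {K L : ℤ} (h : L ≠ 0) : (K, L) ≠ (0, 0) := by
  intro hp
  rw [Prod.ext_iff] at hp
  exact h hp.2

lemma Q_degree_of_pos (b : Ω) (Dg : Polynomial ℂ) (hd : 1 ≤ Dg.natDegree) :
    (Polynomial.C b - Dg.map (algebraMap ℂ Ω)).degree = (Dg.natDegree : WithBot ℕ) := by
  have hD0 : Dg ≠ 0 := fun h => by rw [h] at hd; simp at hd
  have hmap : (Dg.map (algebraMap ℂ Ω)).degree = Dg.degree :=
    Polynomial.degree_map_eq_of_injective (algebraMap ℂ Ω).injective Dg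
  have hlt : (Polynomial.C b).degree < (Dg.map (algebraMap ℂ Ω)).degree := by
    refine lt_of_le_of_lt Polynomial.degree_C_le ?_
    rw [hmap, Polynomial.degree_eq_natDegree hD0]
    exact_mod_cast (show 0 < Dg.natDegree by omega)
  rw [Polynomial.degree_sub_eq_right_of_degree_lt hlt, hmap, Polynomial.degree_eq_natDegree hD0]

lemma q_natDegree_of_pos (Dg : Polynomial ℂ) (hd : 1 ≤ Dg.natDegree) :
    (Polynomial.C (MvPolynomial.X 1 : MvPolynomial (Fin 2) ℂ) -
      Dg.map (MvPolynomial.C)).natDegree = Dg.natDegree := by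
  have hD0 : Dg ≠ 0 := fun h => by rw [h] at hd; simp at hd
  have hmap : (Dg.map (MvPolynomial.C : ℂ →+* MvPolynomial (Fin 2) ℂ)).degree = Dg.degree :=
    Polynomial.degree_map_eq_of_injective (MvPolynomial.C_injective (Fin 2) ℂ) Dg
  have hlt : (Polynomial.C (MvPolynomial.X 1 : MvPolynomial (Fin 2) ℂ)).degree <
      (Dg.map (MvPolynomial.C : ℂ →+* MvPolynomial (Fin 2) ℂ)).degree := by
    refine lt_of_le_of_lt Polynomial.degree_C_le ?_
    rw [hmap, Polynomial.degree_eq_natDegree hD0]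
    exact_mod_cast (show 0 < Dg.natDegree by omega)
  have hdeg : (Polynomial.C (MvPolynomial.X 1 : MvPolynomial (Fin 2) ℂ) -
      Dg.map (MvPolynomial.C)).degree = (Dg.natDegree : WithBot ℕ) := by
    rw [Polynomial.degree_sub_eq_right_of_degree_lt hlt, hmap,
      Polynomial.degree_eq_natDegree hD0]
  exact Polynomial.natDegree_eq_of_degree_eq_some hdeg

lemma q_natDegree_of_zero (Dg : Polynomial ℂ) (hd : Dg.natDegree = 0) :
    (Polynomial.C (MvPolynomial.X 1 : MvPolynomial (Fin 2) ℂ) -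
      Dg.map (MvPolynomial.C)).natDegree = 0 := by
  conv_lhs => rw [Polynomial.eq_C_of_natDegree_eq_zero hd]
  rw [Polynomial.map_C, ← Polynomial.C_sub, Polynomial.natDegree_C]

lemma masterN0 (f g : Polynomial (Matrix (Fin r) (Fin r) ℂ)) (a b : Ω)
    (hT : phiab a b (Tres f g) = 0)
    (hd0 : ((matPolyEquiv.symm g).det).natDegree = 0)
    (hbne : b ≠ algebraMap ℂ Ω (((matPolyEquiv.symm g).det).coeff 0)) : False := by
  set Dg := (matPolyEquiv.symm g).det with hDg
  rw [eval_Tres, map_q] at hT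
  have hP : ((Pmat f 0).map (phiab a b)).degree ≤ (((Pmat f 0).natDegree : ℕ) : WithBot ℕ) :=
    le_trans Polynomial.degree_map_le Polynomial.degree_le_natDegree
  have hQform : Polynomial.C b - Dg.map (algebraMap ℂ Ω) =
      Polynomial.C (b - algebraMap ℂ Ω (Dg.coeff 0)) := by
    conv_lhs => rw [Polynomial.eq_C_of_natDegree_eq_zero hd0]
    rw [Polynomial.map_C, ← Polynomial.C_sub]
  rw [hQform] at hT
  have hQ : (Polynomial.C (b - algebraMap ℂ Ω (Dg.coeff 0))).degree ≤
      (((Polynomial.C (MvPolynomial.X 1 : MvPolynomial (Fin 2) ℂ) -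
        Dg.map (MvPolynomial.C)).natDegree : ℕ) : WithBot ℕ) :=
    le_trans Polynomial.degree_C_le (by exact_mod_cast Nat.zero_le _)
  obtain ⟨u, v, huv, hud, hvd, hkey⟩ := sylShape_det_eq_zero hP hQ hT
  rw [q_natDegree_of_zero Dg hd0] at hud
  have hu0 : u = 0 := by
    by_contra h
    have := Polynomial.zero_le_degree_iff.mpr h
    rw [Nat.cast_zero] at hud
    exact absurd (lt_of_le_of_lt this hud) (lt_irrefl _)
  rw [hu0, zero_mul, zero_add] at hkey
  rcases mul_eq_zero.mp hkey with hv | hq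
  · exact huv ⟨hu0, hv⟩
  · exact Polynomial.C_ne_zero.mpr (sub_ne_zero.mpr hbne) hq

lemma master (hr : 1 ≤ r) (f g : Polynomial (Matrix (Fin r) (Fin r) ℂ))
    (hindep : ∀ μ : Ω,
      (μ • (1 : Matrix (Fin r) (Fin r) Ω) - (matPolyEquiv.symm f).map ⇑toClosure).det = 0 →
      ∀ k l : ℤ, (k, l) ≠ (0, 0) → μ ^ k * toClosure (matPolyEquiv.symm g).det ^ l ≠ 1)
    (a b : Ω) (hb0 : b ≠ 0) (htr : ¬ IsIntegral ℂ a ∨ ¬ IsIntegral ℂ b)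
    (K L : ℤ) (hKL : (K, L) ≠ (0, 0)) (hrel : a ^ K * b ^ L = 1)
    (hT : phiab a b (Tres f g) = 0)
    (hd : 1 ≤ ((matPolyEquiv.symm g).det).natDegree) : False := by
  set Dg := (matPolyEquiv.symm g).det with hDg
  rw [eval_Tres, map_q] at hT
  have hP : ((Pmat f 0).map (phiab a b)).degree ≤ (((Pmat f 0).natDegree : ℕ) : WithBot ℕ) :=
    le_trans Polynomial.degree_map_le Polynomial.degree_le_natDegree
  have hQd : (Polynomial.C b - Dg.map (algebraMap ℂ Ω)).degree =
      (((Polynomial.C (MvPolynomial.X 1 : MvPolynomial (Fin 2) ℂ) -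
        Dg.map (MvPolynomial.C)).natDegree : ℕ) : WithBot ℕ) := by
    rw [q_natDegree_of_pos Dg hd]
    exact Q_degree_of_pos b Dg hd
  obtain ⟨x₀, hPx, hQx⟩ := exists_common_root hP hQd
    (by rw [q_natDegree_of_pos Dg hd]; exact hd) hT
  rw [eval_Pmat] at hPx
  have hbx : b = Polynomial.aeval x₀ Dg := by
    rw [Polynomial.eval_sub, Polynomial.eval_C, Polynomial.eval_map,
      ← Polynomial.aeval_def, sub_eq_zero] at hQx
    exact hQx
  by_cases htrans : Function.Injective (fun h : Polynomial ℂ => Polynomial.aeval x₀ h)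
  · obtain ⟨σ, hσinj, hσ⟩ := exists_sigma' x₀ htrans
    obtain ⟨μ, hμa, hμdet⟩ := exists_mu' (matPolyEquiv.symm f) σ x₀ hσ hPx
    refine hindep μ hμdet K L hKL ?_
    apply hσinj
    rw [_root_.map_one, _root_.map_mul, map_zpow₀, map_zpow₀, hμa, hσ, ← hbx]
    exact hrel
  · have hx : IsIntegral ℂ x₀ := by
      rw [Function.not_injective_iff] at htrans
      obtain ⟨h1, h2, he, hne⟩ := htrans
      have halgx : IsAlgebraic ℂ x₀ :=
        ⟨h1 - h2, sub_ne_zero.mpr hne, by rw [_root_.map_sub, he, sub_self]⟩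
      exact halgx.isIntegral
    have hai : IsIntegral ℂ a := eigen_integral (matPolyEquiv.symm f) hx hPx
    have hbi : IsIntegral ℂ b := by
      rw [hbx]
      have hsub : Algebra.adjoin ℂ ({x₀} : Set Ω) ≤ integralClosure ℂ Ω :=
        Algebra.adjoin_le_iff.mpr (Set.singleton_subset_iff.mpr hx)
      exact hsub (Polynomial.aeval_mem_adjoin_singleton ℂ x₀)
  
    rcases htr with h | h
    · exact h hai
    · exact h hbi

end Master

end Chunks

/-- **Lemma 2.1(ii).** If every eigenvalue of `f(xI)`, as an element of an
algebraic closure of `ℂ(x)`, is multiplicatively independent of `det(g(xI))`, then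
`T_{f,g}(y₁, y₂)` has no factor of the form `y₁^i y₂^j − ρ` or `y₁^i − ρ y₂^j` with
`i, j` nonnegative integers not both zero and `ρ` a root of unity. -/
theorem statement6 (r : ℕ) (hr : 1 ≤ r)
    (f g : Polynomial (Matrix (Fin r) (Fin r) ℂ))
    (hf : 1 ≤ f.natDegree) (hg : 1 ≤ g.natDegree)
    (hindep : ∀ μ : AlgebraicClosure (RatFunc ℂ),
      (μ • (1 : Matrix (Fin r) (Fin r) (AlgebraicClosure (RatFunc ℂ))) -
          (matPolyEquiv.symm f).map toClosure).det = 0 →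
      ∀ k l : ℤ, (k, l) ≠ (0, 0) →
        μ ^ k * toClosure (matPolyEquiv.symm g).det ^ l ≠ 1) :
    ∀ i j : ℕ, ¬(i = 0 ∧ j = 0) → ∀ ρ : ℂ, (∃ k : ℕ, 1 ≤ k ∧ ρ ^ k = 1) →
      ¬((MvPolynomial.X 0 : MvPolynomial (Fin 2) ℂ) ^ i * MvPolynomial.X 1 ^ j -
          MvPolynomial.C ρ ∣ Tres f g) ∧
      ¬((MvPolynomial.X 0 : MvPolynomial (Fin 2) ℂ) ^ i -
          MvPolynomial.C ρ * MvPolynomial.X 1 ^ j ∣ Tres f g) := by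
  classical
  intro i j hij ρ hρex
  obtain ⟨k, hk1, hρk⟩ := hρex
  have hk0 : k ≠ 0 := by omega
  have hρ0 : ρ ≠ 0 := by
    intro h
    rw [h, zero_pow hk0] at hρk
    exact zero_ne_one hρk
  set Ω' := AlgebraicClosure (RatFunc ℂ) with hΩ'
  set Dg := (matPolyEquiv.symm g).det with hDg
  set ρΩ := algebraMap ℂ (AlgebraicClosure (RatFunc ℂ)) ρ with hρΩ
  have hinjC : Function.Injective (algebraMap ℂ (AlgebraicClosure (RatFunc ℂ))) :=
    (algebraMap ℂ (AlgebraicClosure (RatFunc ℂ))).injective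
  have hρΩk : ρΩ ^ k = 1 := by rw [hρΩ, ← map_pow, hρk, _root_.map_one]
  have hρΩ0 : ρΩ ≠ 0 := fun h => hρ0 (hinjC (by rw [_root_.map_zero]; exact h))
  have hs0 : toClosure (Polynomial.X : Polynomial ℂ) ≠ 0 := by
    intro h
    exact Polynomial.X_ne_zero (toClosure_injective (by rw [h, map_zero]))
  have hdvd_eval : ∀ Φ : MvPolynomial (Fin 2) ℂ, Φ ∣ Tres f g →
      ∀ a b : AlgebraicClosure (RatFunc ℂ), phiab a b Φ = 0 → phiab a b (Tres f g) = 0 := by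
    rintro Φ ⟨c, hc⟩ a b h0
    rw [hc, _root_.map_mul, h0, zero_mul]
  have htD : Dg.natDegree = 0 →
      toClosure Dg = algebraMap ℂ (AlgebraicClosure (RatFunc ℂ)) (Dg.coeff 0) := by
    intro hd0
    conv_lhs => rw [Polynomial.eq_C_of_natDegree_eq_zero hd0]
    rw [halg]
    rfl
  constructor
  · -- first form : X0^i * X1^j - C ρ
    intro hdvd
    have hTz := hdvd_eval _ hdvd
    have hΦ : ∀ a b : AlgebraicClosure (RatFunc ℂ),
        phiab a b ((MvPolynomial.X 0 : MvPolynomial (Fin 2) ℂ) ^ i * MvPolynomial.X 1 ^ j -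
          MvPolynomial.C ρ) = a ^ i * b ^ j - ρΩ := by
      intro a b
      rw [_root_.map_sub, _root_.map_mul, map_pow, map_pow, phiab_X0, phiab_X1, hρΩ]
      congr 1
      simp [phiab]
    rcases Nat.eq_zero_or_pos Dg.natDegree with hd0 | hd1
    · by_cases hi0 : i = 0
      · have hj0 : j ≠ 0 := fun h => hij ⟨hi0, h⟩
        by_cases hforced : ∀ β : ℂ, β ^ j = ρ → β = Dg.coeff 0
        · obtain ⟨β, hβ⟩ := exists_pow_eq (K := ℂ) hj0 ρ
          have hdρ : (Dg.coeff 0) ^ j = ρ := by rw [← hforced β hβ]; exact hβ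
          obtain ⟨μ, hμ⟩ := exists_eigenvalue hr ((matPolyEquiv.symm f).map ⇑toClosure)
          refine hindep μ hμ 0 ((j * k : ℕ) : ℤ)
            (pairne2 (Int.natCast_ne_zero.mpr (Nat.mul_ne_zero hj0 hk0))) ?_
          rw [zpow_zero, one_mul, zpow_natCast, htD hd0, ← map_pow, pow_mul, hdρ, hρk, _root_.map_one]
        · push_neg at hforced
          obtain ⟨β, hβj, hβne⟩ := hforced
          refine masterN0 f g 1 (algebraMap ℂ (AlgebraicClosure (RatFunc ℂ)) β)
            (hTz _ _ ?_) hd0 (fun h => hβne (hinjC h))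
          rw [hΦ, hi0, pow_zero, one_mul, ← map_pow, hβj, hρΩ, sub_self]
      · haveI : CharZero (AlgebraicClosure (RatFunc ℂ)) := charZero_of_injective_algebraMap hinjC
        set dΩ := algebraMap ℂ (AlgebraicClosure (RatFunc ℂ)) (Dg.coeff 0) with hdΩ
        obtain ⟨b, hbne, hb0⟩ : ∃ b : AlgebraicClosure (RatFunc ℂ), b ≠ dΩ ∧ b ≠ 0 := by
          by_cases h : dΩ = -1
          · refine ⟨1, fun h1 => ?_, one_ne_zero⟩
            rw [h] at h1
            norm_num at h1
          · exact ⟨dΩ + 1, fun h1 => one_ne_zero (by linear_combination h1),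
              fun h1 => h (by linear_combination h1)⟩
        obtain ⟨a, ha⟩ := exists_pow_eq hi0 (ρΩ / b ^ j)
        refine masterN0 f g a b (hTz _ _ ?_) hd0 hbne
        rw [hΦ, ha, div_mul_cancel₀ _ (pow_ne_zero j hb0), sub_self]
    · by_cases hi0 : i = 0
      · have hj0 : j ≠ 0 := fun h => hij ⟨hi0, h⟩
        obtain ⟨b, hbj⟩ := exists_pow_eq hj0 ρΩ
        have hb0 : b ≠ 0 := fun h => hρΩ0 (by rw [← hbj, h, zero_pow hj0])
        refine master hr f g hindep (toClosure Polynomial.X) b hb0 (Or.inl s_not_integral)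
          0 ((j * k : ℕ) : ℤ)
          (pairne2 (Int.natCast_ne_zero.mpr (Nat.mul_ne_zero hj0 hk0))) ?_ (hTz _ _ ?_) hd1
        · rw [zpow_zero, one_mul, zpow_natCast, pow_mul, hbj, hρΩk]
        · rw [hΦ, hi0, pow_zero, one_mul, hbj, sub_self]
      · by_cases hj0 : j = 0
        · obtain ⟨a, hai⟩ := exists_pow_eq hi0 ρΩ
          refine master hr f g hindep a (toClosure Polynomial.X) hs0 (Or.inr s_not_integral)
            ((i * k : ℕ) : ℤ) 0
            (pairne1 (Int.natCast_ne_zero.mpr (Nat.mul_ne_zero hi0 hk0))) ?_ (hTz _ _ ?_) hd1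
          · rw [zpow_natCast, zpow_zero, mul_one, pow_mul, hai, hρΩk]
          · rw [hΦ, hj0, pow_zero, mul_one, hai, sub_self]
        · obtain ⟨a, hai⟩ := exists_pow_eq hi0 (ρΩ / (toClosure Polynomial.X) ^ j)
          refine master hr f g hindep a (toClosure Polynomial.X) hs0 (Or.inr s_not_integral)
            ((i * k : ℕ) : ℤ) ((j * k : ℕ) : ℤ)
            (pairne1 (Int.natCast_ne_zero.mpr (Nat.mul_ne_zero hi0 hk0))) ?_ (hTz _ _ ?_) hd1
          · rw [zpow_natCast, zpow_natCast, pow_mul, pow_mul, ← mul_pow, hai,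
              div_mul_cancel₀ _ (pow_ne_zero _ hs0), hρΩk]
          · rw [hΦ, hai, div_mul_cancel₀ _ (pow_ne_zero _ hs0), sub_self]
  · -- second form : X0^i - C ρ * X1^j
    intro hdvd
    have hTz := hdvd_eval _ hdvd
    have hΦ : ∀ a b : AlgebraicClosure (RatFunc ℂ),
        phiab a b ((MvPolynomial.X 0 : MvPolynomial (Fin 2) ℂ) ^ i -
          MvPolynomial.C ρ * MvPolynomial.X 1 ^ j) = a ^ i - ρΩ * b ^ j := by
      intro a b
      rw [_root_.map_sub, _root_.map_mul, map_pow, map_pow, phiab_X0, phiab_X1, hρΩ]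
      congr 2
      simp [phiab]
    rcases Nat.eq_zero_or_pos Dg.natDegree with hd0 | hd1
    · by_cases hi0 : i = 0
      · have hj0 : j ≠ 0 := fun h => hij ⟨hi0, h⟩
        by_cases hforced : ∀ β : ℂ, β ^ j = ρ⁻¹ → β = Dg.coeff 0
        · obtain ⟨β, hβ⟩ := exists_pow_eq (K := ℂ) hj0 ρ⁻¹
          have hdρ : (Dg.coeff 0) ^ j = ρ⁻¹ := by rw [← hforced β hβ]; exact hβ
          obtain ⟨μ, hμ⟩ := exists_eigenvalue hr ((matPolyEquiv.symm f).map ⇑toClosure)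
          refine hindep μ hμ 0 ((j * k : ℕ) : ℤ)
            (pairne2 (Int.natCast_ne_zero.mpr (Nat.mul_ne_zero hj0 hk0))) ?_
          rw [zpow_zero, one_mul, zpow_natCast, htD hd0, ← map_pow, pow_mul, hdρ,
            inv_pow, hρk, inv_one, _root_.map_one]
        · push_neg at hforced
          obtain ⟨β, hβj, hβne⟩ := hforced
          refine masterN0 f g 1 (algebraMap ℂ (AlgebraicClosure (RatFunc ℂ)) β)
            (hTz _ _ ?_) hd0 (fun h => hβne (hinjC h))
          rw [hΦ, hi0, pow_zero, ← map_pow, hβj, hρΩ, ← _root_.map_mul,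
            mul_inv_cancel₀ hρ0, _root_.map_one, sub_self]
      · haveI : CharZero (AlgebraicClosure (RatFunc ℂ)) := charZero_of_injective_algebraMap hinjC
        set dΩ := algebraMap ℂ (AlgebraicClosure (RatFunc ℂ)) (Dg.coeff 0) with hdΩ
        obtain ⟨b, hbne, hb0⟩ : ∃ b : AlgebraicClosure (RatFunc ℂ), b ≠ dΩ ∧ b ≠ 0 := by
          by_cases h : dΩ = -1
          · refine ⟨1, fun h1 => ?_, one_ne_zero⟩
            rw [h] at h1
            norm_num at h1
          · exact ⟨dΩ + 1, fun h1 => one_ne_zero (by linear_combination h1),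
              fun h1 => h (by linear_combination h1)⟩
        obtain ⟨a, ha⟩ := exists_pow_eq hi0 (ρΩ * b ^ j)
        refine masterN0 f g a b (hTz _ _ ?_) hd0 hbne
        rw [hΦ, ha, sub_self]
    · by_cases hi0 : i = 0
      · have hj0 : j ≠ 0 := fun h => hij ⟨hi0, h⟩
        obtain ⟨b, hbj⟩ := exists_pow_eq hj0 ρΩ⁻¹
        have hb0 : b ≠ 0 := fun h => (inv_ne_zero hρΩ0) (by rw [← hbj, h, zero_pow hj0])
        refine master hr f g hindep (toClosure Polynomial.X) b hb0 (Or.inl s_not_integral)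
          0 ((j * k : ℕ) : ℤ)
          (pairne2 (Int.natCast_ne_zero.mpr (Nat.mul_ne_zero hj0 hk0))) ?_ (hTz _ _ ?_) hd1
        · rw [zpow_zero, one_mul, zpow_natCast, pow_mul, hbj, inv_pow, hρΩk, inv_one]
        · rw [hΦ, hi0, pow_zero, hbj, mul_inv_cancel₀ hρΩ0, sub_self]
      · by_cases hj0 : j = 0
        · obtain ⟨a, hai⟩ := exists_pow_eq hi0 ρΩ
          refine master hr f g hindep a (toClosure Polynomial.X) hs0 (Or.inr s_not_integral)
            ((i * k : ℕ) : ℤ) 0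
            (pairne1 (Int.natCast_ne_zero.mpr (Nat.mul_ne_zero hi0 hk0))) ?_ (hTz _ _ ?_) hd1
          · rw [zpow_natCast, zpow_zero, mul_one, pow_mul, hai, hρΩk]
          · rw [hΦ, hj0, pow_zero, mul_one, hai, sub_self]
        · obtain ⟨a, hai⟩ := exists_pow_eq hi0 (ρΩ * (toClosure Polynomial.X) ^ j)
          refine master hr f g hindep a (toClosure Polynomial.X) hs0 (Or.inr s_not_integral)
            ((i * k : ℕ) : ℤ) (-((j * k : ℕ) : ℤ))
            (pairne1 (Int.natCast_ne_zero.mpr (Nat.mul_ne_zero hi0 hk0))) ?_ (hTz _ _ ?_) hd1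
          · rw [zpow_natCast, _root_.zpow_neg, zpow_natCast, pow_mul, hai, mul_pow,
              ← pow_mul, hρΩk, one_mul, mul_inv_cancel₀ (pow_ne_zero _ hs0)]
          · rw [hΦ, hai, sub_self]
end

section
/- Let r ≥ 1 and f, g ∈ M_r(ℂ)[Z] be matrix polynomials. Define P_f(x, y₁) = det(y₁ I − f(xI)), P_g(x, y₂) = det(y₂ I − g(xI)), R_{f,g}(y₁, y₂) = Res_x(P_f(x, y₁), P_g(x, y₂)) and T_{f,g}(y₁, y₂) = Res_x(P_f(x, y₁), y₂ − det(g(xI))). Then both R_{f,g} and T_{f,g} are nonzero polynomials in ℂ[y₁, y₂]. -/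
open Polynomial Matrix

section Statement10Aux

noncomputable def Φ : MvPolynomial (Fin 2) ℂ ≃ₐ[ℂ] Polynomial (MvPolynomial (Fin 1) ℂ) :=
  (MvPolynomial.renameEquiv ℂ (Equiv.swap 0 1)).trans (MvPolynomial.finSuccEquiv ℂ 1)

lemma Φ_C (c : ℂ) : Φ (MvPolynomial.C c) = Polynomial.C (MvPolynomial.C c) := by
  simp [Φ, MvPolynomial.finSuccEquiv_apply]

lemma Φ_X1 : Φ (MvPolynomial.X 1) = Polynomial.X := by
  simp [Φ, Equiv.swap_apply_right, MvPolynomial.finSuccEquiv_apply]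

lemma Φ_X0 : Φ (MvPolynomial.X 0) = Polynomial.C (MvPolynomial.X 0) := by
  have h : Equiv.swap (0 : Fin 2) 1 0 = Fin.succ 0 := rfl
  simp [Φ, h, MvPolynomial.finSuccEquiv_apply]
  rw [show (1 : Fin 2) = Fin.succ 0 from rfl, Fin.cases_succ]

variable {r : ℕ}

lemma Pmat_eq (h : Polynomial (Matrix (Fin r) (Fin r) ℂ)) (v : Fin 2) :
    Pmat h v = Polynomial.eval (Polynomial.C (MvPolynomial.X v))
      ((matPolyEquiv.symm h).charpoly.map (Polynomial.mapRingHom MvPolynomial.C)) := by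
  rw [← Matrix.charpoly_map, Matrix.charpoly,
    show Polynomial.eval (Polynomial.C (MvPolynomial.X v))
        ((charmatrix ((matPolyEquiv.symm h).map (Polynomial.mapRingHom MvPolynomial.C))).det)
      = (Polynomial.evalRingHom (Polynomial.C (MvPolynomial.X v)))
        ((charmatrix ((matPolyEquiv.symm h).map (Polynomial.mapRingHom MvPolynomial.C))).det)
      from rfl,
    RingHom.map_det (Polynomial.evalRingHom (Polynomial.C (MvPolynomial.X v)))
      (charmatrix ((matPolyEquiv.symm h).map (Polynomial.mapRingHom MvPolynomial.C)))]
  unfold Pmat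
  congr 1
  ext i j
  by_cases hij : i = j
  · subst hij
    simp [Matrix.charmatrix_apply_eq, Matrix.sub_apply, Matrix.smul_apply, Matrix.one_apply_eq]
  · simp [Matrix.charmatrix_apply_ne _ _ _ hij, Matrix.sub_apply, Matrix.smul_apply,
      Matrix.one_apply_ne hij, hij]

lemma coeff_Pmat (h : Polynomial (Matrix (Fin r) (Fin r) ℂ)) (v : Fin 2) (k : ℕ) :
    (Pmat h v).coeff k = ∑ j ∈ Finset.range (r+1),
      MvPolynomial.C (((matPolyEquiv.symm h).charpoly.coeff j).coeff k) *
        (MvPolynomial.X v : MvPolynomial (Fin 2) ℂ) ^ j := by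
  have hdeg : ((matPolyEquiv.symm h).charpoly.map
      (Polynomial.mapRingHom (MvPolynomial.C : ℂ →+* MvPolynomial (Fin 2) ℂ))).natDegree < r + 1 := by
    refine lt_of_le_of_lt Polynomial.natDegree_map_le ?_
    rw [Matrix.charpoly_natDegree_eq_dim, Fintype.card_fin]
    omega
  rw [Pmat_eq, Polynomial.eval_eq_sum_range' hdeg, Polynomial.finset_sum_coeff]
  apply Finset.sum_congr rfl
  intro j _
  rw [Polynomial.coeff_map, ← Polynomial.C_pow, Polynomial.coeff_mul_C,
    Polynomial.coe_mapRingHom, Polynomial.coeff_map]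

noncomputable def upoly (h : Polynomial (Matrix (Fin r) (Fin r) ℂ)) (k : ℕ) : Polynomial ℂ :=
  ∑ j ∈ Finset.range (r+1),
    Polynomial.C (((matPolyEquiv.symm h).charpoly.coeff j).coeff k) * Polynomial.X ^ j

lemma charpoly_coeff_r (h : Polynomial (Matrix (Fin r) (Fin r) ℂ)) :
    (matPolyEquiv.symm h).charpoly.coeff r = 1 := by
  have hm := Matrix.charpoly_monic (matPolyEquiv.symm h)
  have hd : (matPolyEquiv.symm h).charpoly.natDegree = r := by
    rw [Matrix.charpoly_natDegree_eq_dim, Fintype.card_fin]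
  have hc := hm.coeff_natDegree
  rwa [hd] at hc

lemma upoly_coeff_r (h : Polynomial (Matrix (Fin r) (Fin r) ℂ)) (k : ℕ) :
    (upoly h k).coeff r = (1 : Polynomial ℂ).coeff k := by
  rw [upoly, Polynomial.finset_sum_coeff]
  rw [Finset.sum_eq_single r]
  · rw [Polynomial.coeff_C_mul, Polynomial.coeff_X_pow, if_pos rfl, mul_one, charpoly_coeff_r]
  · intro j _ hj
    rw [Polynomial.coeff_C_mul, Polynomial.coeff_X_pow, if_neg (fun hh => hj hh.symm), mul_zero]
  · intro hmem
    exact absurd (Finset.self_mem_range_succ r) hmem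

lemma upoly_natDegree_le (h : Polynomial (Matrix (Fin r) (Fin r) ℂ)) (k : ℕ) :
    (upoly h k).natDegree ≤ r :=
  Polynomial.natDegree_sum_le_of_forall_le _ _ fun j hj =>
    le_trans (Polynomial.natDegree_C_mul_X_pow_le _ _) (by
      simpa [Nat.lt_succ_iff] using hj)

lemma upoly_monic (h : Polynomial (Matrix (Fin r) (Fin r) ℂ)) :
    (upoly h 0).Monic :=
  Polynomial.monic_of_natDegree_le_of_coeff_eq_one r (upoly_natDegree_le h 0)
    (by rw [upoly_coeff_r, Polynomial.coeff_one_zero])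

lemma upoly_natDegree (h : Polynomial (Matrix (Fin r) (Fin r) ℂ)) :
    (upoly h 0).natDegree = r :=
  le_antisymm (upoly_natDegree_le h 0) (Polynomial.le_natDegree_of_ne_zero (by
    rw [upoly_coeff_r, Polynomial.coeff_one_zero]; exact one_ne_zero))

lemma upoly_natDegree_lt (h : Polynomial (Matrix (Fin r) (Fin r) ℂ)) (k : ℕ) (hk : 1 ≤ k)
    (hr : 1 ≤ r) : (upoly h k).natDegree < r := by
  rcases lt_or_eq_of_le (upoly_natDegree_le h k) with hlt | heq
  · exact hlt
  · exfalso
    have hc : (upoly h k).coeff r = 0 := by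
      rw [upoly_coeff_r, Polynomial.coeff_one, if_neg (by omega)]
    by_cases h0 : upoly h k = 0
    · rw [h0] at heq; simp at heq; omega
    · have := Polynomial.leadingCoeff_ne_zero.mpr h0
      rw [Polynomial.leadingCoeff, heq, hc] at this
      exact this rfl

lemma phi_coeff_one (h : Polynomial (Matrix (Fin r) (Fin r) ℂ)) (k : ℕ) :
    Φ ((Pmat h 1).coeff k) = (upoly h k).map (MvPolynomial.C) := by
  rw [coeff_Pmat, map_sum, upoly, Polynomial.map_sum]
  apply Finset.sum_congr rfl
  intro j _
  rw [_root_.map_mul, _root_.map_pow, Φ_C, Φ_X1, Polynomial.map_mul, Polynomial.map_C, Polynomial.map_pow,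
    Polynomial.map_X]

lemma phi_coeff_zero (h : Polynomial (Matrix (Fin r) (Fin r) ℂ)) (k : ℕ) :
    Φ ((Pmat h 0).coeff k) =
      Polynomial.C (Polynomial.aeval (MvPolynomial.X 0 : MvPolynomial (Fin 1) ℂ) (upoly h k)) := by
  rw [coeff_Pmat, map_sum, upoly, map_sum, map_sum]
  apply Finset.sum_congr rfl
  intro j _
  rw [_root_.map_mul, _root_.map_pow, Φ_C, Φ_X0, _root_.map_mul, _root_.map_pow,
    Polynomial.aeval_C, Polynomial.aeval_X, _root_.map_mul, _root_.map_pow]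
  congr 1


lemma Pmat_ne_zero (f : Polynomial (Matrix (Fin r) (Fin r) ℂ)) : Pmat f 0 ≠ 0 := by
  intro h0
  have h1 : Φ ((Pmat f 0).coeff 0) = 0 := by rw [h0, Polynomial.coeff_zero, map_zero]
  rw [phi_coeff_zero] at h1
  have h2 : (Polynomial.aeval (MvPolynomial.X 0 : MvPolynomial (Fin 1) ℂ)) (upoly f 0) = 0 :=
    Polynomial.C_eq_zero.mp h1
  have h3 : upoly f 0 = 0 := by
    have h4 := congrArg (MvPolynomial.aeval (fun _ : Fin 1 => (Polynomial.X : Polynomial ℂ))) h2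
    rwa [map_zero, ← Polynomial.aeval_algHom_apply, MvPolynomial.aeval_X,
      Polynomial.aeval_X_left_apply] at h4
  exact (upoly_monic f).ne_zero h3


lemma key {S : Type*} [CommRing S] (n m e : ℕ) (he : 1 ≤ e)
    (M : Matrix (Fin (n+m)) (Fin (n+m)) (Polynomial S))
    (h1 : ∀ (i j : Fin (n+m)), (i : ℕ) < n → (M i j).natDegree = 0)
    (h2 : ∀ (i j : Fin (n+m)), n ≤ (i : ℕ) → j ≠ i → (M i j).natDegree < e)
    (h3m : ∀ (i : Fin (n+m)), n ≤ (i : ℕ) → (M i i).Monic)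
    (h3d : ∀ (i : Fin (n+m)), n ≤ (i : ℕ) → (M i i).natDegree = e) :
    (M.det).coeff (m * e) =
      (Matrix.of fun i j : Fin n =>
        Polynomial.constantCoeff (M (Fin.castAdd m i) (Fin.castAdd m j))).det := by
  classical
  have hfix : ∀ σ : Equiv.Perm (Fin (n+m)), (∀ i, n ≤ ((σ i : Fin (n+m)) : ℕ) → σ i = i) →
      ∀ i : Fin (n+m), n ≤ (i : ℕ) → σ i = i := by
    intro σ hσ i hi
    have h1' : σ (σ⁻¹ i) = i := σ.apply_symm_apply i
    have h2' := hσ (σ⁻¹ i) (by rw [h1']; exact hi)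
    rw [h2'] at h1'
    rw [← h1']
    exact h2'
  -- the zero part
  rw [Matrix.det_apply', Polynomial.finset_sum_coeff,
    ← Finset.sum_filter_add_sum_filter_not Finset.univ
      (fun σ : Equiv.Perm (Fin (n+m)) => ∀ i, n ≤ ((σ i : Fin (n+m)) : ℕ) → σ i = i)]
  have hzero : ∀ σ ∈ Finset.univ.filter (fun σ : Equiv.Perm (Fin (n+m)) =>
      ¬ ∀ i, n ≤ ((σ i : Fin (n+m)) : ℕ) → σ i = i),
      ((((Equiv.Perm.sign σ : ℤ) : Polynomial S)) * ∏ i, M (σ i) i).coeff (m*e) = 0 := by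
    intro σ hσ
    simp only [Finset.mem_filter, Finset.mem_univ, true_and, not_forall] at hσ
    obtain ⟨i₀, hi₀n, hi₀ne⟩ := hσ
    rw [← Polynomial.C_eq_intCast, Polynomial.coeff_C_mul]
    rw [Polynomial.coeff_eq_zero_of_natDegree_lt, mul_zero]
    have hle : (∏ i, M (σ i) i).natDegree ≤ ∑ i, (M (σ i) i).natDegree :=
      Polynomial.natDegree_prod_le _ _
    refine lt_of_le_of_lt hle ?_
    set B := Finset.univ.filter (fun i : Fin (n+m) => n ≤ ((σ i : Fin (n+m)) : ℕ)) with hB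
    have hsum : ∑ i, (M (σ i) i).natDegree = ∑ i ∈ B, (M (σ i) i).natDegree := by
      rw [← Finset.sum_filter_add_sum_filter_not Finset.univ
        (fun i : Fin (n+m) => n ≤ ((σ i : Fin (n+m)) : ℕ))]
      have hz : ∑ i ∈ Finset.univ.filter (fun i : Fin (n+m) =>
          ¬ n ≤ ((σ i : Fin (n+m)) : ℕ)), (M (σ i) i).natDegree = 0 := by
        apply Finset.sum_eq_zero; intro i hi
        simp only [Finset.mem_filter, Finset.mem_univ, true_and, not_le] at hi
        exact h1 _ _ hi
      rw [hz, add_zero]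
    rw [hsum]
    have hcard : B.card = m := by
      have himg : B = Finset.image (⇑σ⁻¹)
          (Finset.univ.filter (fun j : Fin (n+m) => n ≤ (j : ℕ))) := by
        ext i
        simp only [hB, Finset.mem_image, Finset.mem_filter, Finset.mem_univ, true_and]
        constructor
        · intro h; exact ⟨σ i, h, σ.symm_apply_apply i⟩
        · rintro ⟨j, hj, rfl⟩
          simpa using hj
      rw [himg, Finset.card_image_of_injective _ σ⁻¹.injective]
      have hbot : Finset.univ.filter (fun j : Fin (n+m) => n ≤ (j : ℕ))
          = Finset.image (Fin.natAdd n) Finset.univ := by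
        ext j
        simp only [Finset.mem_filter, Finset.mem_univ, true_and, Finset.mem_image]
        constructor
        · intro h
          exact ⟨⟨(j : ℕ) - n, by omega⟩, Fin.val_injective (by simp; omega)⟩
        · rintro ⟨k, rfl⟩; simp
      rw [hbot, Finset.card_image_of_injective _
        (fun a b hab => by simpa [Fin.ext_iff] using hab), Finset.card_univ, Fintype.card_fin]
    have hlt : ∑ i ∈ B, (M (σ i) i).natDegree < ∑ _i ∈ B, e := by
      apply Finset.sum_lt_sum
      · intro i hi
        simp only [hB, Finset.mem_filter, Finset.mem_univ, true_and] at hi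
        by_cases h : σ i = i
        · rw [h]
          exact le_of_eq (h3d i (h ▸ hi))
        · exact le_of_lt (h2 _ _ hi (fun hh => h hh.symm))
      · refine ⟨i₀, ?_, ?_⟩
        · simp only [hB, Finset.mem_filter, Finset.mem_univ, true_and]; exact hi₀n
        · exact h2 _ _ hi₀n (fun hh => hi₀ne hh.symm)
    calc ∑ i ∈ B, (M (σ i) i).natDegree < ∑ _i ∈ B, e := hlt
      _ = B.card * e := by rw [Finset.sum_const, smul_eq_mul]
      _ = m * e := by rw [hcard]
  rw [Finset.sum_eq_zero hzero, add_zero]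
  -- the fixed part
  set ι : Equiv.Perm (Fin n) → Equiv.Perm (Fin (n+m)) :=
    fun τ => (finSumFinEquiv.permCongr (Equiv.Perm.sumCongr τ (1 : Equiv.Perm (Fin m)))) with hι
  have hι1 : ∀ τ (i : Fin n), ι τ (Fin.castAdd m i) = Fin.castAdd m (τ i) := by
    intro τ i
    simp [hι, Equiv.permCongr_apply]
  have hι2 : ∀ τ (k : Fin m), ι τ (Fin.natAdd n k) = Fin.natAdd n k := by
    intro τ k
    simp [hι, Equiv.permCongr_apply]
  have hιinj : Function.Injective ι := by
    intro a b hab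
    ext i
    have h := Equiv.ext_iff.mp hab (Fin.castAdd m i)
    rw [hι1, hι1] at h
    simpa [Fin.ext_iff] using h
  have hset : Finset.univ.filter (fun σ : Equiv.Perm (Fin (n+m)) =>
      ∀ i, n ≤ ((σ i : Fin (n+m)) : ℕ) → σ i = i) = Finset.image ι Finset.univ := by
    ext σ
    simp only [Finset.mem_filter, Finset.mem_univ, true_and, Finset.mem_image]
    constructor
    · intro hσ
      have hfix' := hfix σ hσ
      have hlt : ∀ i : Fin n, ((σ (Fin.castAdd m i) : Fin (n+m)) : ℕ) < n := by
        intro i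
        by_contra hcon
        push_neg at hcon
        have h := hσ _ hcon
        rw [h] at hcon
        simp at hcon
        omega
      set f : Fin n → Fin n := fun i => ⟨σ (Fin.castAdd m i), hlt i⟩ with hf
      have hfinj : Function.Injective f := by
        intro a b hab
        have h : σ (Fin.castAdd m a) = σ (Fin.castAdd m b) :=
          Fin.val_injective (by simpa [hf, Fin.ext_iff] using hab)
        have h' := σ.injective h
        simpa [Fin.ext_iff] using h'
      obtain ⟨τ, hτ⟩ : ∃ τ : Equiv.Perm (Fin n), ∀ i, τ i = f i :=
        ⟨Equiv.ofBijective f (Finite.injective_iff_bijective.mp hfinj), fun i => rfl⟩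
      refine ⟨τ, ?_⟩
      ext x
      rcases lt_or_ge (x : ℕ) n with hx | hx
      · have hx' : x = Fin.castAdd m ⟨(x : ℕ), hx⟩ := Fin.val_injective (by simp)
        rw [hx', hι1, hτ]
        rfl
      · rw [hfix' x hx]
        have hx' : x = Fin.natAdd n ⟨(x : ℕ) - n, by omega⟩ := Fin.val_injective (by simp; omega)
        rw [hx', hι2]
    · rintro ⟨τ, rfl⟩
      intro i hi
      rcases lt_or_ge (i : ℕ) n with hx | hx
      · exfalso
        have hx' : i = Fin.castAdd m ⟨(i : ℕ), hx⟩ := Fin.val_injective (by simp)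
        rw [hx', hι1] at hi
        simp at hi
        omega
      · have hx' : i = Fin.natAdd n ⟨(i : ℕ) - n, by omega⟩ := Fin.val_injective (by simp; omega)
        rw [hx', hι2]
  rw [hset, Finset.sum_image (fun a _ b _ h => hιinj h), Matrix.det_apply']
  apply Finset.sum_congr rfl
  intro τ _
  have hsign : ((Equiv.Perm.sign (ι τ) : ℤ) : S[X]) = ((Equiv.Perm.sign τ : ℤ) : S[X]) := by
    simp [hι, Equiv.Perm.sign_permCongr, Equiv.Perm.sign_sumCongr]
  have hprod : (∏ i, M (ι τ i) i) =
      (∏ i : Fin n, M (Fin.castAdd m (τ i)) (Fin.castAdd m i)) *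
      (∏ k : Fin m, M (Fin.natAdd n k) (Fin.natAdd n k)) := by
    rw [Fin.prod_univ_add]
    congr 1
    · exact Finset.prod_congr rfl fun i _ => by rw [hι1]
    · exact Finset.prod_congr rfl fun k _ => by rw [hι2]
  have hbotmon : (∏ k : Fin m, M (Fin.natAdd n k) (Fin.natAdd n k)).Monic :=
    Polynomial.monic_prod_of_monic _ _ fun k _ => h3m _ (by simp)
  have hbotdeg : (∏ k : Fin m, M (Fin.natAdd n k) (Fin.natAdd n k)).natDegree = m * e := by
    rw [Polynomial.natDegree_prod_of_monic _ _ (fun k _ => h3m _ (by simp))]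
    have : ∀ k : Fin m, (M (Fin.natAdd n k) (Fin.natAdd n k)).natDegree = e :=
      fun k => h3d _ (by simp)
    simp [this, Finset.sum_const, mul_comm]
  have htop : (∏ i : Fin n, M (Fin.castAdd m (τ i)) (Fin.castAdd m i)) =
      Polynomial.C (∏ i : Fin n,
        Polynomial.constantCoeff (M (Fin.castAdd m (τ i)) (Fin.castAdd m i))) := by
    rw [map_prod]
    apply Finset.prod_congr rfl
    intro i _
    have h0 : (M (Fin.castAdd m (τ i)) (Fin.castAdd m i)).natDegree = 0 :=
      h1 _ _ (by simp)
    exact Polynomial.eq_C_of_natDegree_eq_zero h0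
  rw [hprod, htop, hsign, ← Polynomial.C_eq_intCast, Polynomial.coeff_C_mul,
    Polynomial.coeff_C_mul, ← hbotdeg, Polynomial.Monic.coeff_natDegree hbotmon, mul_one]
  rfl

lemma aux (e : ℕ) (he : 1 ≤ e) (p q : Polynomial (MvPolynomial (Fin 2) ℂ))
    (hp : ∀ k, (Φ (p.coeff k)).natDegree = 0)
    (hp0 : p ≠ 0)
    (hq0m : (Φ (q.coeff 0)).Monic) (hq0d : (Φ (q.coeff 0)).natDegree = e)
    (hqk : ∀ k, 1 ≤ k → (Φ (q.coeff k)).natDegree < e) :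
    _root_.resultant p q ≠ 0 := by
  intro hzero
  set n := q.natDegree with hn
  set m := p.natDegree with hm
  have hmap : Φ (_root_.resultant p q) = ((_root_.sylvester p q).map Φ).det := AlgEquiv.map_det Φ _
  set M : Matrix (Fin (n + m)) (Fin (n + m)) (Polynomial (MvPolynomial (Fin 1) ℂ)) :=
    (_root_.sylvester p q).map Φ with hM
  have hentry : ∀ i j : Fin (n + m), M i j =
      if (i : ℕ) < n then
        (if (j : ℕ) ≤ (i : ℕ) + m then Φ (p.coeff (m + i - j)) else 0)
      else
        (if (j : ℕ) ≤ (i : ℕ) then Φ (q.coeff ((i : ℕ) - j)) else 0) := by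
    intro i j
    rw [hM, Matrix.map_apply, _root_.sylvester, Matrix.of_apply]
    by_cases hi : (i : ℕ) < n
    · rw [if_pos hi, if_pos hi, apply_ite Φ, map_zero]
    · rw [if_neg hi, if_neg hi]
      push_neg at hi
      have e1 : (i : ℕ) - n + n = (i : ℕ) := by omega
      have e2 : n + ((i : ℕ) - n) = (i : ℕ) := by omega
      rw [e1, e2, apply_ite Φ, map_zero]
  have h1 : ∀ (i j : Fin (n+m)), (i : ℕ) < n → (M i j).natDegree = 0 := by
    intro i j hi
    rw [hentry, if_pos hi]
    split
    · exact hp _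
    · exact Polynomial.natDegree_zero
  have h2 : ∀ (i j : Fin (n+m)), n ≤ (i : ℕ) → j ≠ i → (M i j).natDegree < e := by
    intro i j hi hij
    rw [hentry, if_neg (not_lt.mpr hi)]
    split
    · refine hqk _ ?_
      have : (j : ℕ) ≠ (i : ℕ) := fun hh => hij (Fin.val_injective hh)
      omega
    · simpa using Nat.succ_le_iff.mp he
  have h3m : ∀ (i : Fin (n+m)), n ≤ (i : ℕ) → (M i i).Monic := by
    intro i hi
    rw [hentry, if_neg (not_lt.mpr hi), if_pos le_rfl, Nat.sub_self]
    exact hq0m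
  have h3d : ∀ (i : Fin (n+m)), n ≤ (i : ℕ) → (M i i).natDegree = e := by
    intro i hi
    rw [hentry, if_neg (not_lt.mpr hi), if_pos le_rfl, Nat.sub_self]
    exact hq0d
  have hkey := key n m e he M h1 h2 h3m h3d
  have hM0 : M.det = 0 := by
    rw [← hmap, hzero, map_zero]
  rw [hM0, Polynomial.coeff_zero] at hkey
  -- the upper-triangular block determinant is nonzero
  set A : Matrix (Fin n) (Fin n) (MvPolynomial (Fin 1) ℂ) :=
    Matrix.of fun i j : Fin n =>
      Polynomial.constantCoeff (M (Fin.castAdd m i) (Fin.castAdd m j)) with hA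
  have hAentry : ∀ i j : Fin n, A i j =
      Polynomial.constantCoeff (if (j : ℕ) ≤ (i : ℕ) + m then Φ (p.coeff (m + i - j)) else 0) := by
    intro i j
    rw [hA, Matrix.of_apply, hentry]
    simp only [Fin.coe_castAdd]
    rw [if_pos i.isLt]
  have htri : A.BlockTriangular id := by
    intro i j hij
    have hij' : (j : ℕ) < (i : ℕ) := hij
    rw [hAentry, if_pos (by omega)]
    have : p.coeff (m + i - j) = 0 :=
      Polynomial.coeff_eq_zero_of_natDegree_lt (by omega)
    rw [this, map_zero, map_zero]
  have hdiag : ∀ i : Fin n, A i i = Polynomial.constantCoeff (Φ (p.coeff m)) := by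
    intro i
    have hmm : m + (i : ℕ) - (i : ℕ) = m := by omega
    rw [hAentry, if_pos (by omega), hmm]
  have hc0 : Polynomial.constantCoeff (Φ (p.coeff m)) ≠ 0 := by
    intro hc
    have hd0 : (Φ (p.coeff m)).natDegree = 0 := hp m
    have := Polynomial.eq_C_of_natDegree_eq_zero hd0
    rw [show (Φ (p.coeff m)).coeff 0 = Polynomial.constantCoeff (Φ (p.coeff m)) from rfl,
      hc, map_zero] at this
    have hφ0 : p.coeff m = 0 := by
      apply Φ.injective
      rw [this, map_zero]
    exact hp0 (Polynomial.leadingCoeff_eq_zero.mp hφ0)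
  have hdet : A.det ≠ 0 := by
    rw [Matrix.det_of_upperTriangular htri]
    refine Finset.prod_ne_zero_iff.mpr fun i _ => ?_
    rw [hdiag]
    exact hc0
  exact hdet hkey.symm

end Statement10Aux


/-- For matrix polynomials `f, g ∈ M_r(ℂ)[Z]` (`r ≥ 1`), the resultants
`R_{f,g} = Res_x(P_f(x,y₁), P_g(x,y₂))` and `T_{f,g} = Res_x(P_f(x,y₁), y₂ − det(g(xI)))`
are nonzero polynomials in `ℂ[y₁, y₂]`. -/
theorem statement10 (r : ℕ) (hr : 1 ≤ r)
    (f g : Polynomial (Matrix (Fin r) (Fin r) ℂ))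
    (hf : 1 ≤ f.natDegree) (hg : 1 ≤ g.natDegree) :
    Rres f g ≠ 0 ∧ Tres f g ≠ 0 := by
  have hp : ∀ k, (Φ ((Pmat f 0).coeff k)).natDegree = 0 := fun k => by
    rw [phi_coeff_zero]; exact Polynomial.natDegree_C _
  have hp0 : Pmat f 0 ≠ 0 := Pmat_ne_zero f
  constructor
  · unfold Rres
    apply aux r hr _ _ hp hp0
    · rw [phi_coeff_one]; exact (upoly_monic g).map _
    · rw [phi_coeff_one, (upoly_monic g).natDegree_map, upoly_natDegree]
    · intro k hk
      rw [phi_coeff_one]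
      exact lt_of_le_of_lt Polynomial.natDegree_map_le (upoly_natDegree_lt g k hk hr)
  · unfold Tres
    set d : Polynomial ℂ := (matPolyEquiv.symm g).det with hd
    set q : Polynomial (MvPolynomial (Fin 2) ℂ) :=
      Polynomial.C (MvPolynomial.X 1 : MvPolynomial (Fin 2) ℂ) - d.map (MvPolynomial.C) with hq
    have hc0 : q.coeff 0 = MvPolynomial.X 1 - MvPolynomial.C (d.coeff 0) := by
      rw [hq, Polynomial.coeff_sub, Polynomial.coeff_C_zero, Polynomial.coeff_map]
    have hck : ∀ k, 1 ≤ k → q.coeff k = - MvPolynomial.C (d.coeff k) := fun k hk => by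
      rw [hq, Polynomial.coeff_sub, Polynomial.coeff_C, if_neg (by omega),
        Polynomial.coeff_map, zero_sub]
    apply aux 1 le_rfl _ _ hp hp0
    · rw [hc0, map_sub, Φ_X1, Φ_C]
      exact Polynomial.monic_X_sub_C _
    · rw [hc0, map_sub, Φ_X1, Φ_C]
      exact Polynomial.natDegree_X_sub_C _
    · intro k hk
      rw [hck k hk, map_neg, Φ_C, Polynomial.natDegree_neg, Polynomial.natDegree_C]
      omega
end
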